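/- arXiv:1807.03971 — 5 statements merged into one kernel-verified Lean document; each statement's English description precedes it below -/
import Mathlib

section
/- Let G₁ = (V₁,E₁) and G₂ = (V₂,E₂) be finite simple undirected graphs with disjoint vertex sets. Then the neighborhood polynomial of the join G₁ + G₂ satisfies N(G₁+G₂, x) = (1+x)^{|V₁|} · N(G₂, x) + (1+x)^{|V₂|} · N(G₁, x) − N(G₁, x) · N(G₂, x). -/
open Classical in
/-- The neighborhood polynomial of a finite simple graph `G`, evaluated at `x`:
the generating function of the family of vertex subsets having a common neighbor. -/
noncomputable def nhdPoly {V : Type*} [Fintype V] (G : SimpleGraph V) (x : ℝ) : ℝ :=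
  ∑ A ∈ Finset.univ.filter (fun A : Finset V => ∃ w : V, ∀ a ∈ A, G.Adj w a), x ^ A.card

/-- The join of two graphs `G₁`, `G₂` with disjoint vertex sets: the disjoint union of
`G₁` and `G₂` together with all edges joining vertices of `V₁` to vertices of `V₂`. -/
def SimpleGraph.join {V₁ V₂ : Type*} (G₁ : SimpleGraph V₁) (G₂ : SimpleGraph V₂) :
    SimpleGraph (V₁ ⊕ V₂) :=
  SimpleGraph.fromRel (fun a b => match a, b with
    | Sum.inl u, Sum.inl v => G₁.Adj u v
    | Sum.inr u, Sum.inr v => G₂.Adj u v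
    | Sum.inl _, Sum.inr _ => True
    | Sum.inr _, Sum.inl _ => True)

open Finset

lemma sum_pow_card {V : Type*} [Fintype V] (x : ℝ) :
    ∑ A : Finset V, x ^ A.card = (1 + x) ^ (Fintype.card V) := by
  classical
  have := Finset.prod_add (fun _ : V => x) (fun _ : V => 1) Finset.univ
  simp only [prod_const, one_pow, mul_one] at this
  rw [add_comm 1 x, ← Finset.card_univ, this, powerset_univ]

lemma join_adj_iff {V₁ V₂ : Type*} (G₁ : SimpleGraph V₁) (G₂ : SimpleGraph V₂)
    (A₁ : Finset V₁) (A₂ : Finset V₂) :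
    (∃ w : V₁ ⊕ V₂, ∀ a ∈ A₁.disjSum A₂, (G₁.join G₂).Adj w a) ↔
      (∃ w : V₁, ∀ a ∈ A₁, G₁.Adj w a) ∨ (∃ w : V₂, ∀ a ∈ A₂, G₂.Adj w a) := by
  classical
  constructor
  · rintro ⟨(v | v), hv⟩
    · left
      exact ⟨v, fun a ha => by
        have := hv (Sum.inl a) (Finset.inl_mem_disjSum.2 ha)
        simp only [SimpleGraph.join, SimpleGraph.fromRel_adj] at this
        rcases this with ⟨hne, h | h⟩
        · exact h
        · exact h.symm⟩
    · right
      exact ⟨v, fun a ha => by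
        have := hv (Sum.inr a) (Finset.inr_mem_disjSum.2 ha)
        simp only [SimpleGraph.join, SimpleGraph.fromRel_adj] at this
        rcases this with ⟨hne, h | h⟩
        · exact h
        · exact h.symm⟩
  · rintro (⟨v, hv⟩ | ⟨v, hv⟩)
    · refine ⟨Sum.inl v, fun a ha => ?_⟩
      rcases Finset.mem_disjSum.1 ha with ⟨b, hb, rfl⟩ | ⟨b, hb, rfl⟩
      · have := hv b hb
        simp only [SimpleGraph.join, SimpleGraph.fromRel_adj]
        exact ⟨by simpa using this.ne, Or.inl this⟩
      · simp only [SimpleGraph.join, SimpleGraph.fromRel_adj]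
        exact ⟨by simp, Or.inl trivial⟩
    · refine ⟨Sum.inr v, fun a ha => ?_⟩
      rcases Finset.mem_disjSum.1 ha with ⟨b, hb, rfl⟩ | ⟨b, hb, rfl⟩
      · simp only [SimpleGraph.join, SimpleGraph.fromRel_adj]
        exact ⟨by simp, Or.inl trivial⟩
      · have := hv b hb
        simp only [SimpleGraph.join, SimpleGraph.fromRel_adj]
        exact ⟨by simpa using this.ne, Or.inl this⟩

/-- The neighborhood polynomial of the join of two graphs with disjoint vertex sets satisfies
`N(G₁+G₂, x) = (1+x)^{|V₁|}·N(G₂,x) + (1+x)^{|V₂|}·N(G₁,x) − N(G₁,x)·N(G₂,x)`. -/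
theorem nhdPoly_join {V₁ V₂ : Type*} [Fintype V₁] [Fintype V₂]
    [Nonempty V₁] [Nonempty V₂] (G₁ : SimpleGraph V₁) (G₂ : SimpleGraph V₂) (x : ℝ) :
    nhdPoly (G₁.join G₂) x =
      (1 + x) ^ (Fintype.card V₁) * nhdPoly G₂ x
        + (1 + x) ^ (Fintype.card V₂) * nhdPoly G₁ x
        - nhdPoly G₁ x * nhdPoly G₂ x := by
  classical
  set P₁ : Finset V₁ → Prop := fun A => ∃ w : V₁, ∀ a ∈ A, G₁.Adj w a with hP₁
  set P₂ : Finset V₂ → Prop := fun A => ∃ w : V₂, ∀ a ∈ A, G₂.Adj w a with hP₂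
  -- step 1: rewrite LHS as sum over pairs
  have key : nhdPoly (G₁.join G₂) x =
      ∑ p ∈ (Finset.univ : Finset (Finset V₁ × Finset V₂)).filter
        (fun p => P₁ p.1 ∨ P₂ p.2), x ^ (p.1.card + p.2.card) := by
    unfold nhdPoly
    refine Finset.sum_nbij' (fun A => (A.toLeft, A.toRight)) (fun p => p.1.disjSum p.2)
      ?_ ?_ ?_ ?_ ?_
    · intro A hA
      simp only [mem_filter, mem_univ, true_and] at hA ⊢
      rw [← (join_adj_iff G₁ G₂ A.toLeft A.toRight), toLeft_disjSum_toRight]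
      exact hA
    · intro p hp
      simp only [mem_filter, mem_univ, true_and] at hp ⊢
      exact (join_adj_iff G₁ G₂ p.1 p.2).2 hp
    · intro A _; exact toLeft_disjSum_toRight
    · intro p _; simp
    · intro A _
      rw [← card_toLeft_add_card_toRight]
  rw [key]
  -- inclusion-exclusion
  have hunion : (Finset.univ : Finset (Finset V₁ × Finset V₂)).filter (fun p => P₁ p.1 ∨ P₂ p.2)
      = Finset.univ.filter (fun p => P₁ p.1) ∪ Finset.univ.filter (fun p => P₂ p.2) := by
    ext p; simp [or_iff_not_imp_left]
  have hinter : (Finset.univ : Finset (Finset V₁ × Finset V₂)).filter (fun p => P₁ p.1) ∩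
      Finset.univ.filter (fun p => P₂ p.2)
      = Finset.univ.filter (fun p => P₁ p.1 ∧ P₂ p.2) := by
    ext p; simp [Finset.mem_filter]
  have incl := Finset.sum_union_inter (s₁ := Finset.univ.filter (fun p : Finset V₁ × Finset V₂ => P₁ p.1))
    (s₂ := Finset.univ.filter (fun p : Finset V₁ × Finset V₂ => P₂ p.2))
    (f := fun p : Finset V₁ × Finset V₂ => x ^ (p.1.card + p.2.card))
  rw [hunion]
  rw [eq_sub_iff_add_eq]
  have e1 : ∑ p ∈ (Finset.univ : Finset (Finset V₁ × Finset V₂)).filter (fun p => P₁ p.1),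
      x ^ (p.1.card + p.2.card) = nhdPoly G₁ x * (1 + x) ^ (Fintype.card V₂) := by
    have : (Finset.univ : Finset (Finset V₁ × Finset V₂)).filter (fun p => P₁ p.1)
        = (Finset.univ.filter P₁) ×ˢ Finset.univ := by
      ext p; simp
    rw [this, Finset.sum_product]
    simp only [pow_add]
    rw [← Finset.sum_mul_sum]
    rw [nhdPoly, sum_pow_card]
  have e2 : ∑ p ∈ (Finset.univ : Finset (Finset V₁ × Finset V₂)).filter (fun p => P₂ p.2),
      x ^ (p.1.card + p.2.card) = (1 + x) ^ (Fintype.card V₁) * nhdPoly G₂ x := by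
    have : (Finset.univ : Finset (Finset V₁ × Finset V₂)).filter (fun p => P₂ p.2)
        = Finset.univ ×ˢ (Finset.univ.filter P₂) := by
      ext p; simp
    rw [this, Finset.sum_product]
    simp only [pow_add]
    rw [← Finset.sum_mul_sum]
    rw [nhdPoly, sum_pow_card]
  have e3 : ∑ p ∈ (Finset.univ : Finset (Finset V₁ × Finset V₂)).filter
      (fun p => P₁ p.1 ∧ P₂ p.2), x ^ (p.1.card + p.2.card)
      = nhdPoly G₁ x * nhdPoly G₂ x := by
    have : (Finset.univ : Finset (Finset V₁ × Finset V₂)).filter (fun p => P₁ p.1 ∧ P₂ p.2)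
        = (Finset.univ.filter P₁) ×ˢ (Finset.univ.filter P₂) := by
      ext p; simp
    rw [this, Finset.sum_product]
    simp only [pow_add]
    rw [← Finset.sum_mul_sum]
    rw [nhdPoly, nhdPoly]
  rw [← hinter] at e3
  rw [← e3, incl, e1, e2]
  ring
end

section
/- Let G = (V,E) be a finite simple graph and let U ⊆ V be a nonempty vertex subset. Let G_{U▷v} = (V ∪ {v}, E ∪ {{u,v} : u ∈ U}) be the graph obtained from G by adding a new vertex v (v ∉ V) and joining v to all vertices of U. For each nonempty W ⊆ U define A_W = x^{|W|} if ∩_{w∈W} N_G(w) = ∅ and A_W = 0 otherwise. Then N(G_{U▷v}, x) = N(G, x) + Σ_{∅ ≠ W ⊆ U} (−1)^{|W|+1} x·(1+x)^{|∩_{w∈W} N_G(w)|} + Σ_{∅ ≠ W ⊆ U} A_W. -/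
/-- The graph `G_{U▷v}` obtained from `G` by adding one new vertex (modelled as `none` in
`Option V`) and joining it to every vertex of the attachment set `U`. -/
def vertexAttach {V : Type*} (G : SimpleGraph V) (U : Set V) : SimpleGraph (Option V) :=
  SimpleGraph.fromRel (fun a b => match a, b with
    | some a, some b => G.Adj a b
    | some a, none => a ∈ U
    | _, _ => False)

open Finset

section AuxAdj
variable {V : Type*} (G : SimpleGraph V) (U : Set V)

lemma va_some_some (u a : V) :
    (vertexAttach G U).Adj (some u) (some a) ↔ G.Adj u a := by
  simp only [vertexAttach, SimpleGraph.fromRel_adj]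
  constructor
  · rintro ⟨h, h1 | h1⟩
    · exact h1
    · exact h1.symm
  · intro h; exact ⟨by simp [h.ne], Or.inl h⟩

lemma va_some_none (u : V) :
    (vertexAttach G U).Adj (some u) none ↔ u ∈ U := by
  simp [vertexAttach, SimpleGraph.fromRel_adj]

lemma va_none_some (a : V) :
    (vertexAttach G U).Adj none (some a) ↔ a ∈ U := by
  simp [vertexAttach, SimpleGraph.fromRel_adj]

end AuxAdj

open Classical in
noncomputable def finsetOptionEquiv (V : Type*) : Finset V × Bool ≃ Finset (Option V) where
  toFun p := if p.2 then insert none (p.1.map Function.Embedding.some)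
             else p.1.map Function.Embedding.some
  invFun A := (A.eraseNone, none ∈ A)
  left_inv p := by
    classical
    obtain ⟨B, b⟩ := p
    cases b
    · simp [Finset.eraseNone_map_some]
    · have h1 : Finset.eraseNone (insert none (B.map Function.Embedding.some)) = B := by
        ext a; simp [Finset.mem_eraseNone]
      simp [h1]
  right_inv A := by
    classical
    by_cases h : none ∈ A
    · simp only [h, if_pos]
      ext (_ | a) <;> simp [h, Finset.mem_eraseNone]
    · simp only [h, if_neg]
      ext (_ | a) <;> simp [h, Finset.mem_eraseNone]

lemma sum_powerset_pow {V : Type*} [DecidableEq V] (s : Finset V) (x : ℝ) :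
    ∑ B ∈ s.powerset, x ^ B.card = (1 + x) ^ s.card := by
  induction s using Finset.induction_on with
  | empty => simp
  | @insert a s ha ih =>
    rw [Finset.powerset_insert, Finset.sum_union, Finset.sum_image,
      Finset.card_insert_of_notMem ha]
    · have h : ∀ t ∈ s.powerset, x ^ (insert a t).card = x * x ^ t.card := by
        intro t ht
        rw [Finset.card_insert_of_notMem (fun h => ha (Finset.mem_powerset.1 ht h))]
        ring
      rw [Finset.sum_congr rfl h, ← Finset.mul_sum, ih, pow_succ]
      ring
    · intro t ht u hu h
      have hta : a ∉ t := fun h' => ha (Finset.mem_powerset.1 ht h')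
      have hua : a ∉ u := fun h' => ha (Finset.mem_powerset.1 hu h')
      have := congrArg (Finset.erase · a) h
      simpa [Finset.erase_insert, hta, hua, Finset.erase_eq_of_notMem] using this
    · rw [Finset.disjoint_right]
      rintro t ht hts
      obtain ⟨u, hu, rfl⟩ := Finset.mem_image.1 ht
      exact ha (Finset.mem_powerset.1 hts (Finset.mem_insert_self a u))

lemma sum_powerset_neg_real {V : Type*} [DecidableEq V] (s : Finset V) :
    ∑ B ∈ s.powerset, (-1 : ℝ) ^ B.card = if s = ∅ then 1 else 0 := by
  have h1 := Finset.sum_powerset_neg_one_pow_card (x := s)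
  have h2 : ((∑ m ∈ s.powerset, (-1 : ℤ) ^ m.card : ℤ) : ℝ)
      = ∑ B ∈ s.powerset, (-1 : ℝ) ^ B.card := by push_cast; rfl
  rw [← h2, h1]
  split <;> simp

open Classical in
/-- The finset of common neighbors of a finset of vertices. -/
noncomputable def commonNbrs {V : Type*} [Fintype V] (G : SimpleGraph V) (W : Finset V) :
    Finset V :=
  Finset.univ.filter (fun a => ∀ w ∈ W, G.Adj w a)

open Classical in
lemma card_commonNbrs {V : Type*} [Fintype V] (G : SimpleGraph V) (W : Finset V) :
    (commonNbrs G W).card = Nat.card ↥(⋂ w ∈ W, G.neighborSet w) := by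
  have h : (⋂ w ∈ W, G.neighborSet w) = ↑(commonNbrs G W) := by
    ext a; simp [commonNbrs, SimpleGraph.mem_neighborSet]
  rw [h, Nat.card_coe_set_eq, Set.ncard_coe_finset]

open Classical in
lemma iInter_commonNbrs_eq_empty {V : Type*} [Fintype V] (G : SimpleGraph V) (W : Finset V) :
    (⋂ w ∈ W, G.neighborSet w) = (∅ : Set V) ↔ commonNbrs G W = ∅ := by
  have h : (⋂ w ∈ W, G.neighborSet w) = ↑(commonNbrs G W) := by
    ext a; simp [commonNbrs, SimpleGraph.mem_neighborSet]
  rw [h]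
  exact_mod_cast Finset.coe_eq_empty

open Classical in
lemma indicator_ie {V : Type*} [Fintype V] (G : SimpleGraph V) (U B : Finset V) :
    (if (∃ u ∈ U, ∀ a ∈ B, G.Adj u a) then (1 : ℝ) else 0)
      = ∑ W ∈ U.powerset.filter (· ≠ ∅),
          (-1 : ℝ) ^ (W.card + 1) * (if B ⊆ commonNbrs G W then 1 else 0) := by
  classical
  set T : Finset V := U.filter (fun u => ∀ a ∈ B, G.Adj u a) with hT
  have hTU : T ⊆ U := Finset.filter_subset _ _
  have hcond : (∃ u ∈ U, ∀ a ∈ B, G.Adj u a) ↔ T ≠ ∅ := by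
    rw [← Finset.nonempty_iff_ne_empty]
    constructor
    · rintro ⟨u, hu, h⟩; exact ⟨u, Finset.mem_filter.2 ⟨hu, h⟩⟩
    · rintro ⟨u, hu⟩
      obtain ⟨hu1, hu2⟩ := Finset.mem_filter.1 hu
      exact ⟨u, hu1, hu2⟩
  have hsub : ∀ W ∈ U.powerset.filter (· ≠ ∅), (B ⊆ commonNbrs G W ↔ W ⊆ T) := by
    intro W hW
    obtain ⟨hWU, -⟩ := Finset.mem_filter.1 hW
    rw [Finset.mem_powerset] at hWU
    constructor
    · intro h w hw
      refine Finset.mem_filter.2 ⟨hWU hw, fun a ha => ?_⟩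
      have h2 := h ha
      simp only [commonNbrs, Finset.mem_filter, Finset.mem_univ, true_and] at h2
      exact h2 w hw
    · intro h a ha
      simp only [commonNbrs, Finset.mem_filter, Finset.mem_univ, true_and]
      intro w hw
      exact (Finset.mem_filter.1 (h hw)).2 a ha
  have hset : (U.powerset.filter (· ≠ ∅)).filter (· ⊆ T) = T.powerset.filter (· ≠ ∅) := by
    ext W
    simp only [Finset.mem_filter, Finset.mem_powerset]
    constructor
    · rintro ⟨⟨-, h2⟩, h3⟩; exact ⟨h3, h2⟩
    · rintro ⟨h1, h2⟩; exact ⟨⟨h1.trans hTU, h2⟩, h1⟩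
  calc (if (∃ u ∈ U, ∀ a ∈ B, G.Adj u a) then (1 : ℝ) else 0)
      = ∑ W ∈ (U.powerset.filter (· ≠ ∅)).filter (· ⊆ T), (-1 : ℝ) ^ (W.card + 1) := by
        rw [hset, Finset.filter_ne', Finset.sum_erase_eq_sub (Finset.empty_mem_powerset T)]
        have hsum : ∑ W ∈ T.powerset, (-1 : ℝ) ^ (W.card + 1)
            = -∑ W ∈ T.powerset, (-1 : ℝ) ^ W.card := by
          rw [← Finset.sum_neg_distrib]
          exact Finset.sum_congr rfl fun W _ => by ring
        rw [hsum, sum_powerset_neg_real]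
        by_cases hT0 : T = ∅ <;> simp [hcond, hT0]
    _ = ∑ W ∈ U.powerset.filter (· ≠ ∅),
          (-1 : ℝ) ^ (W.card + 1) * (if B ⊆ commonNbrs G W then 1 else 0) := by
        rw [Finset.sum_filter]
        refine Finset.sum_congr rfl (fun W hW => ?_)
        by_cases h : B ⊆ commonNbrs G W
        · rw [if_pos ((hsub W hW).1 h), if_pos h, mul_one]
        · rw [if_neg (fun h2 => h ((hsub W hW).2 h2)), if_neg h, mul_zero]

open Classical in
lemma vaCondFalse {V : Type*} [Fintype V] (G : SimpleGraph V) (U : Finset V) (B : Finset V) :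
    (∃ w : Option V, ∀ a ∈ B.map Function.Embedding.some, (vertexAttach G ↑U).Adj w a)
      ↔ ((∃ u, ∀ a ∈ B, G.Adj u a) ∨ B ⊆ U) := by
  constructor
  · rintro ⟨(_ | u), hw⟩
    · right
      intro a ha
      exact (va_none_some G ↑U a).1 (hw (some a) (Finset.mem_map_of_mem _ ha))
    · left
      exact ⟨u, fun a ha => (va_some_some G ↑U u a).1 (hw (some a) (Finset.mem_map_of_mem _ ha))⟩
  · rintro (⟨u, hu⟩ | h)
    · refine ⟨some u, fun a ha => ?_⟩
      obtain ⟨b, hb, rfl⟩ := Finset.mem_map.1 ha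
      exact (va_some_some G ↑U u b).2 (hu b hb)
    · refine ⟨none, fun a ha => ?_⟩
      obtain ⟨b, hb, rfl⟩ := Finset.mem_map.1 ha
      exact (va_none_some G ↑U b).2 (h hb)

open Classical in
lemma vaCondTrue {V : Type*} [Fintype V] (G : SimpleGraph V) (U : Finset V) (B : Finset V) :
    (∃ w : Option V, ∀ a ∈ insert none (B.map Function.Embedding.some),
        (vertexAttach G ↑U).Adj w a)
      ↔ (∃ u ∈ U, ∀ a ∈ B, G.Adj u a) := by
  constructor
  · rintro ⟨(_ | u), hw⟩
    · exact absurd (hw none (Finset.mem_insert_self _ _)) (vertexAttach G ↑U).irrefl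
    · refine ⟨u, (va_some_none G ↑U u).1 (hw none (Finset.mem_insert_self _ _)), fun a ha => ?_⟩
      exact (va_some_some G ↑U u a).1
        (hw (some a) (Finset.mem_insert_of_mem (Finset.mem_map_of_mem _ ha)))
  · rintro ⟨u, hu, h⟩
    refine ⟨some u, fun a ha => ?_⟩
    rcases Finset.mem_insert.1 ha with rfl | ha
    · exact (va_some_none G ↑U u).2 hu
    · obtain ⟨b, hb, rfl⟩ := Finset.mem_map.1 ha
      exact (va_some_some G ↑U u b).2 (h b hb)

open Classical in
lemma middle_sum {V : Type*} [Fintype V] (G : SimpleGraph V) (U : Finset V) (x : ℝ) :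
    ∑ B : Finset V, (if (∃ u ∈ U, ∀ a ∈ B, G.Adj u a) then x ^ (B.card + 1) else 0)
      = ∑ W ∈ U.powerset.filter (· ≠ ∅),
          (-1 : ℝ) ^ (W.card + 1) * (x * (1 + x) ^ (Nat.card ↥(⋂ w ∈ W, G.neighborSet w))) := by
  classical
  have key : ∀ B : Finset V, (if (∃ u ∈ U, ∀ a ∈ B, G.Adj u a) then x ^ (B.card + 1) else 0)
      = ∑ W ∈ U.powerset.filter (· ≠ ∅),
          (-1 : ℝ) ^ (W.card + 1) * (if B ⊆ commonNbrs G W then x ^ (B.card + 1) else 0) := by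
    intro B
    have h1 : (if (∃ u ∈ U, ∀ a ∈ B, G.Adj u a) then x ^ (B.card + 1) else 0)
        = (if (∃ u ∈ U, ∀ a ∈ B, G.Adj u a) then (1 : ℝ) else 0) * x ^ (B.card + 1) := by
      split <;> ring
    rw [h1, indicator_ie, Finset.sum_mul]
    refine Finset.sum_congr rfl fun W _ => ?_
    split <;> ring
  rw [Finset.sum_congr rfl fun B _ => key B, Finset.sum_comm]
  refine Finset.sum_congr rfl fun W _ => ?_
  rw [← Finset.mul_sum]
  congr 1
  have h2 : ∑ B : Finset V, (if B ⊆ commonNbrs G W then x ^ (B.card + 1) else 0)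
      = ∑ B ∈ (commonNbrs G W).powerset, x ^ (B.card + 1) := by
    rw [← Finset.sum_filter]
    congr 1
    ext B; simp [Finset.mem_powerset]
  rw [h2, ← card_commonNbrs]
  have h3 : ∀ B ∈ (commonNbrs G W).powerset, x ^ (B.card + 1) = x * x ^ B.card :=
    fun B _ => by ring
  rw [Finset.sum_congr rfl h3, ← Finset.mul_sum, sum_powerset_pow]

set_option maxHeartbeats 1000000 in
open Classical in
/-- Vertex attachment formula:
`N(G_{U▷v}, x) = N(G,x) + Σ_{∅≠W⊆U} (−1)^{|W|+1} x(1+x)^{|∩_{w∈W} N_G(w)|} + Σ_{∅≠W⊆U} A_W`,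
where `A_W = x^{|W|}` if `∩_{w∈W} N_G(w) = ∅` and `A_W = 0` otherwise. -/
theorem nhdPoly_vertex_attach {V : Type*} [Fintype V] [Nonempty V]
    (G : SimpleGraph V) (U : Finset V) (hU : U ≠ ∅) (x : ℝ) :
    nhdPoly (vertexAttach G ↑U) x =
      nhdPoly G x
        + ∑ W ∈ U.powerset.filter (· ≠ ∅),
            (-1 : ℝ) ^ (W.card + 1) * (x * (1 + x) ^ (Nat.card ↥(⋂ w ∈ W, G.neighborSet w)))
        + ∑ W ∈ U.powerset.filter (· ≠ ∅),
            (if (⋂ w ∈ W, G.neighborSet w) = (∅ : Set V) then x ^ W.card else 0) := by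
  classical
  rw [nhdPoly, ← Finset.sum_filter_add_sum_filter_not _ (fun A : Finset (Option V) => none ∈ A)]
  refine Eq.trans (congrArg₂ (· + ·)
    (Finset.sum_nbij' (i := fun A : Finset (Option V) => A.eraseNone)
      (j := fun B : Finset V => insert none (B.map Function.Embedding.some))
      (t := Finset.univ.filter (fun B : Finset V => ∃ u ∈ U, ∀ a ∈ B, G.Adj u a))
      (g := fun B : Finset V => x ^ (B.card + 1)) ?_ ?_ ?_ ?_ ?_)
    (Finset.sum_nbij' (i := fun A : Finset (Option V) => A.eraseNone)
      (j := fun B : Finset V => B.map Function.Embedding.some)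
      (t := Finset.univ.filter
        (fun B : Finset V => (∃ u, ∀ a ∈ B, G.Adj u a) ∨ B ⊆ U))
      (g := fun B : Finset V => x ^ B.card) ?_ ?_ ?_ ?_ ?_)) ?_
  · -- hi for part B
    intro A hA
    simp only [Finset.mem_filter, Finset.mem_univ, true_and] at hA ⊢
    obtain ⟨hP, hnone⟩ := hA
    have hAeq : insert none ((A.eraseNone).map Function.Embedding.some) = A := by
      ext (_ | a) <;> simp [Finset.mem_eraseNone, hnone]
    rw [← hAeq] at hP
    exact (vaCondTrue G U _).1 hP
  · -- hj for part B
    intro B hB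
    simp only [Finset.mem_filter, Finset.mem_univ, true_and] at hB ⊢
    exact ⟨(vaCondTrue G U B).2 hB, Finset.mem_insert_self _ _⟩
  · -- left_inv for part B
    intro A hA
    simp only [Finset.mem_filter, Finset.mem_univ, true_and] at hA
    ext (_ | a) <;> simp [Finset.mem_eraseNone, hA.2]
  · -- right_inv for part B
    intro B hB
    ext a
    simp [Finset.mem_eraseNone]
  · -- values for part B
    intro A hA
    simp only [Finset.mem_filter, Finset.mem_univ, true_and] at hA
    have hAeq : insert none ((A.eraseNone).map Function.Embedding.some) = A := by
      ext (_ | a) <;> simp [Finset.mem_eraseNone, hA.2]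
    have hcard : A.card = (A.eraseNone).card + 1 := by
      conv_lhs => rw [← hAeq]
      rw [Finset.card_insert_of_notMem (by simp), Finset.card_map]
    exact congrArg (fun n => x ^ n) hcard
  · -- hi for part A
    intro A hA
    simp only [Finset.mem_filter, Finset.mem_univ, true_and] at hA ⊢
    obtain ⟨hP, hnone⟩ := hA
    have hAeq : (A.eraseNone).map Function.Embedding.some = A := by
      ext (_ | a) <;> simp [Finset.mem_eraseNone, hnone]
    rw [← hAeq] at hP
    exact (vaCondFalse G U _).1 hP
  · -- hj for part A
    intro B hB
    simp only [Finset.mem_filter, Finset.mem_univ, true_and] at hB ⊢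
    refine ⟨(vaCondFalse G U B).2 hB, by simp⟩
  · -- left_inv for part A
    intro A hA
    simp only [Finset.mem_filter, Finset.mem_univ, true_and] at hA
    ext (_ | a) <;> simp [Finset.mem_eraseNone, hA.2]
  · -- right_inv for part A
    intro B hB
    exact Finset.eraseNone_map_some B
  · -- values for part A
    intro A hA
    simp only [Finset.mem_filter, Finset.mem_univ, true_and] at hA
    have hAeq : (A.eraseNone).map Function.Embedding.some = A := by
      ext (_ | a) <;> simp [Finset.mem_eraseNone, hA.2]
    have hcard : A.card = (A.eraseNone).card := by
      conv_lhs => rw [← hAeq]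
      rw [Finset.card_map]
    exact congrArg (fun n => x ^ n) hcard
  · -- the arithmetic at type V
    rw [Finset.sum_filter, Finset.sum_filter]
    have hsplit : ∀ B : Finset V,
        (if ((∃ u, ∀ a ∈ B, G.Adj u a) ∨ B ⊆ U) then x ^ B.card else 0)
          = (if (∃ u, ∀ a ∈ B, G.Adj u a) then x ^ B.card else 0)
            + (if (B ⊆ U ∧ ¬∃ u, ∀ a ∈ B, G.Adj u a) then x ^ B.card else 0) := by
      intro B
      by_cases hp : (∃ u, ∀ a ∈ B, G.Adj u a) <;> by_cases hq : B ⊆ U <;> simp [hp, hq]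
    rw [Finset.sum_congr rfl fun B _ => hsplit B, Finset.sum_add_distrib]
    have hS2 : ∑ B : Finset V, (if (∃ u, ∀ a ∈ B, G.Adj u a) then x ^ B.card else 0)
        = nhdPoly G x := by
      rw [nhdPoly, Finset.sum_filter]
    have hiff : ∀ B : Finset V,
        ((¬∃ u, ∀ a ∈ B, G.Adj u a) ↔ (⋂ w ∈ B, G.neighborSet w) = (∅ : Set V)) := by
      intro B
      rw [← Set.not_nonempty_iff_eq_empty]
      apply not_congr
      constructor
      · rintro ⟨u, hu⟩
        exact ⟨u, Set.mem_iInter₂.2 fun a ha => (hu a ha).symm⟩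
      · rintro ⟨u, hu⟩
        exact ⟨u, fun a ha => ((Set.mem_iInter₂.1 hu) a ha).symm⟩
    have hS3 : ∑ B : Finset V, (if (B ⊆ U ∧ ¬∃ u, ∀ a ∈ B, G.Adj u a) then x ^ B.card else 0)
        = ∑ W ∈ U.powerset.filter (· ≠ ∅),
            (if (⋂ w ∈ W, G.neighborSet w) = (∅ : Set V) then x ^ W.card else 0) := by
      rw [← Finset.sum_filter, ← Finset.sum_filter]
      congr 1
      ext B
      simp only [Finset.mem_filter, Finset.mem_univ, true_and, Finset.mem_powerset]
      constructor
      · rintro ⟨hBU, h2⟩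
        have h3 := (hiff B).1 h2
        refine ⟨⟨hBU, ?_⟩, h3⟩
        rintro rfl
        rw [show (⋂ w ∈ (∅ : Finset V), G.neighborSet w) = Set.univ by simp] at h3
        exact Set.univ_nonempty.ne_empty h3
      · rintro ⟨⟨hBU, -⟩, h3⟩
        exact ⟨hBU, (hiff B).2 h3⟩
    rw [middle_sum G U x, hS2, hS3]
    ring
end

section
/- Let G = (V,E) be a finite simple graph with at least two vertices and let v ∈ V. Then N(G, x) = N(G−v, x) + Σ_{∅ ≠ U ⊆ N_G(v)} (−1)^{|U|+1} x·(1+x)^{|∩_{u∈U} N_{G−v}(u)|} + Σ_{∅ ≠ U ⊆ N_G(v)} A_U, where for nonempty U ⊆ N_G(v), A_U = x^{|U|} if ∩_{u∈U} N_{G−v}(u) = ∅ and A_U = 0 otherwise. -/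
open Finset in
lemma pow_sum_subsets {V : Type*} [DecidableEq V] (F : Finset V) (x : ℝ) :
    (1 + x) ^ F.card = ∑ B ∈ F.powerset, x ^ B.card := by
  calc (1 + x) ^ F.card = ∏ _i ∈ F, (x + 1) := by rw [prod_const, add_comm]
    _ = ∑ B ∈ F.powerset, (∏ _i ∈ B, x) * ∏ _i ∈ F \ B, 1 := prod_add _ _ _
    _ = ∑ B ∈ F.powerset, x ^ B.card := by simp

open Finset in
lemma sum_neg_one_pow_real {V : Type*} [DecidableEq V] (W : Finset V) :
    ∑ U ∈ W.powerset, (-1 : ℝ) ^ U.card = if W = ∅ then 1 else 0 := by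
  have h := Finset.sum_powerset_neg_one_pow_card (x := W)
  have : ((∑ m ∈ W.powerset, (-1 : ℤ) ^ m.card : ℤ) : ℝ)
      = ((if W = ∅ then 1 else 0 : ℤ) : ℝ) := by exact_mod_cast h
  push_cast at this
  convert this using 2 <;> simp [apply_ite]

open Finset in
lemma L1 {V : Type*} [DecidableEq V] (W : Finset V) (c : ℝ) :
    ∑ U ∈ W.powerset.filter (fun U => U ≠ ∅), (-1 : ℝ) ^ (U.card + 1) * c
      = (if W = ∅ then 0 else 1) * c := by
  classical
  have split := Finset.sum_filter_add_sum_filter_not W.powerset (fun U => U = ∅)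
      (fun U => (-1 : ℝ) ^ (U.card + 1) * c)
  have hfe : W.powerset.filter (fun U => U = ∅) = {∅} := by
    ext U
    simp only [mem_filter, mem_powerset, mem_singleton]
    constructor
    · rintro ⟨_, h⟩; exact h
    · rintro rfl; exact ⟨empty_subset _, rfl⟩
  have hall : ∑ U ∈ W.powerset, (-1 : ℝ) ^ (U.card + 1) * c
      = (if W = ∅ then 1 else 0) * (-c) := by
    rw [← sum_neg_one_pow_real W, sum_mul]
    exact Finset.sum_congr rfl fun U _ => by ring
  have hne : W.powerset.filter (fun U => ¬ U = ∅)
      = W.powerset.filter (fun U => U ≠ ∅) := rfl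
  rw [hne, hfe] at split
  simp only [sum_singleton, card_empty, pow_one] at split
  have : ∑ U ∈ W.powerset.filter (fun U => U ≠ ∅), (-1 : ℝ) ^ (U.card + 1) * c
      = (if W = ∅ then 1 else 0) * (-c) - (-1) * c := by
    rw [← hall, ← split]; ring
  rw [this]
  by_cases h : W = ∅ <;> simp [h] <;> ring

lemma del_adj {V : Type*} (G : SimpleGraph V) (v w a : V) :
    (G.deleteEdges (G.incidenceSet v)).Adj w a ↔ G.Adj w a ∧ w ≠ v ∧ a ≠ v := by
  simp only [SimpleGraph.deleteEdges_adj, SimpleGraph.incidenceSet, Set.mem_setOf_eq,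
    SimpleGraph.mem_edgeSet, Sym2.mem_iff]
  constructor
  · rintro ⟨h, h2⟩
    refine ⟨h, fun hw => h2 ⟨h, Or.inl hw.symm⟩, fun ha => h2 ⟨h, Or.inr ha.symm⟩⟩
  · rintro ⟨h, hw, ha⟩
    exact ⟨h, fun ⟨_, hc⟩ => hc.elim (fun e => hw e.symm) (fun e => ha e.symm)⟩

open Classical Finset in
private lemma nhdPoly_vertex_removal_aux {V : Type*} [Fintype V] (hV : 1 < Fintype.card V)
    (G : SimpleGraph V) (v : V) (x : ℝ) :
    nhdPoly G x =
      nhdPoly (G.deleteEdges (G.incidenceSet v)) x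
        + ∑ U ∈ Finset.univ.filter (fun U : Finset V =>
            U ≠ ∅ ∧ (↑U : Set V) ⊆ G.neighborSet v),
            (-1 : ℝ) ^ (U.card + 1)
              * (x * (1 + x) ^
                  (Nat.card ↥(⋂ u ∈ U, (G.deleteEdges (G.incidenceSet v)).neighborSet u)))
        + ∑ U ∈ Finset.univ.filter (fun U : Finset V =>
            U ≠ ∅ ∧ (↑U : Set V) ⊆ G.neighborSet v),
            (if (⋂ u ∈ U, (G.deleteEdges (G.incidenceSet v)).neighborSet u) = (∅ : Set V)
             then x ^ U.card else 0) := by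
  have hne : Nonempty V := Fintype.card_pos_iff.mp (by omega)
  set G' := G.deleteEdges (G.incidenceSet v) with hG'
  have hadj : ∀ w a, G'.Adj w a ↔ G.Adj w a ∧ w ≠ v ∧ a ≠ v := fun w a => del_adj G v w a
  set S : Finset (Finset V) := Finset.univ.filter (fun A => ∃ w : V, ∀ a ∈ A, G.Adj w a) with hS
  set S' : Finset (Finset V) := Finset.univ.filter (fun A => ∃ w : V, ∀ a ∈ A, G'.Adj w a) with hS'
  set T1 : Finset (Finset V) := Finset.univ.filter
    (fun A => v ∈ A ∧ ∃ w, G.Adj v w ∧ ∀ a ∈ A.erase v, G'.Adj w a) with hT1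
  set T2 : Finset (Finset V) := Finset.univ.filter
    (fun A => A ≠ ∅ ∧ (↑A : Set V) ⊆ G.neighborSet v ∧
      (⋂ u ∈ A, G'.neighborSet u) = (∅ : Set V)) with hT2
  have hsub : S' ⊆ S := by
    intro A hA
    simp only [hS, hS', mem_filter, mem_univ, true_and] at hA ⊢
    obtain ⟨w, hw⟩ := hA
    exact ⟨w, fun a ha => ((hadj w a).mp (hw a ha)).1⟩
  have hdecomp : S \ S' = T1 ∪ T2 := by
    ext A
    simp only [hS, hS', hT1, hT2, mem_sdiff, mem_union, mem_filter, mem_univ, true_and]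
    constructor
    · rintro ⟨⟨w, hw⟩, hns⟩
      by_cases hv : v ∈ A
      · left
        refine ⟨hv, w, (hw v hv).symm, fun a ha => ?_⟩
        rw [hadj]
        have haA := mem_of_mem_erase ha
        exact ⟨hw a haA, fun e => (G.irrefl (e ▸ hw v hv)), ne_of_mem_erase ha⟩
      · right
        have hwv : w = v := by
          by_contra hwv
          exact hns ⟨w, fun a ha => (hadj w a).mpr
            ⟨hw a ha, hwv, fun e => hv (e ▸ ha)⟩⟩
        subst hwv
        refine ⟨?_, fun a ha => hw a ha, ?_⟩
        · rintro rfl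
          exact hns ⟨w, fun a ha => absurd ha (notMem_empty a)⟩
        · rw [Set.eq_empty_iff_forall_notMem]
          intro z hz
          simp only [Set.mem_iInter, SimpleGraph.mem_neighborSet] at hz
          exact hns ⟨z, fun a ha => ((hz a ha).symm)⟩
    · rintro (⟨hv, w, hwadj, hw⟩ | ⟨hAne, hAsub, hAint⟩)
      · constructor
        · refine ⟨w, fun a ha => ?_⟩
          by_cases hav : a = v
          · subst hav; exact hwadj.symm
          · exact ((hadj w a).mp (hw a (mem_erase.mpr ⟨hav, ha⟩))).1
        · rintro ⟨z, hz⟩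
          have := (hadj z v).mp (hz v hv)
          exact this.2.2 rfl
      · constructor
        · exact ⟨v, fun a ha => hAsub ha⟩
        · rintro ⟨z, hz⟩
          obtain ⟨a0, ha0⟩ := Finset.nonempty_iff_ne_empty.mpr hAne
          have hzmem : z ∈ ⋂ u ∈ A, G'.neighborSet u := by
            simp only [Set.mem_iInter, SimpleGraph.mem_neighborSet]
            exact fun u hu => (hz u hu).symm
          rw [hAint] at hzmem
          exact hzmem
  have hdisj : Disjoint T1 T2 := by
    rw [Finset.disjoint_left]
    intro A hA1 hA2
    simp only [hT1, hT2, mem_filter, mem_univ, true_and] at hA1 hA2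
    exact G.irrefl (hA2.2.1 hA1.1)
  have hsplit : nhdPoly G x = nhdPoly G' x + (∑ A ∈ T1, x ^ A.card + ∑ A ∈ T2, x ^ A.card) := by
    have := Finset.sum_sdiff (f := fun A : Finset V => x ^ A.card) hsub
    have e : nhdPoly G' x = ∑ A ∈ S', x ^ A.card := by
      rw [nhdPoly, hS']
      exact Finset.sum_congr (by ext A; simp) (fun _ _ => rfl)
    rw [e, nhdPoly, ← hS, ← this, hdecomp, Finset.sum_union hdisj]
    ring
  have hT2sum : ∑ A ∈ T2, x ^ A.card
      = ∑ U ∈ Finset.univ.filter (fun U : Finset V =>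
            U ≠ ∅ ∧ (↑U : Set V) ⊆ G.neighborSet v),
          (if (⋂ u ∈ U, G'.neighborSet u) = (∅ : Set V) then x ^ U.card else 0) := by
    rw [← Finset.sum_filter]
    congr 1
    ext A
    simp only [hT2, Finset.mem_filter, Finset.mem_univ, true_and]
    tauto
  have hT1sum : ∑ A ∈ T1, x ^ A.card
      = ∑ U ∈ Finset.univ.filter (fun U : Finset V =>
            U ≠ ∅ ∧ (↑U : Set V) ⊆ G.neighborSet v),
          (-1 : ℝ) ^ (U.card + 1)
            * (x * (1 + x) ^ (Nat.card ↥(⋂ u ∈ U, G'.neighborSet u))) := by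
    set F : Finset V → Finset V :=
      fun U => Finset.univ.filter (fun a => ∀ u ∈ U, G'.Adj u a) with hF
    set W : Finset V → Finset V :=
      fun B => (G.neighborFinset v).filter (fun w => ∀ a ∈ B, G'.Adj w a) with hW
    set D : Finset (Finset V) :=
      Finset.univ.filter (fun B : Finset V => ∃ w, G.Adj v w ∧ ∀ a ∈ B, G'.Adj w a) with hD
    have hNat : ∀ U : Finset V,
        Nat.card ↥(⋂ u ∈ U, G'.neighborSet u) = (F U).card := by
      intro U
      have hset : (⋂ u ∈ U, G'.neighborSet u) = ↑(F U) := by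
        ext a
        simp [hF, SimpleGraph.mem_neighborSet]
      rw [hset, Nat.card_coe_set_eq, Set.ncard_coe_finset]
    have hbij : ∑ A ∈ T1, x ^ A.card = x * ∑ B ∈ D, x ^ B.card := by
      rw [Finset.mul_sum]
      refine Finset.sum_bij' (fun A _ => A.erase v) (fun B _ => insert v B)
        ?_ ?_ ?_ ?_ ?_
      · intro A hA
        simp only [hT1, hD, Finset.mem_filter, Finset.mem_univ, true_and] at hA ⊢
        exact hA.2
      · intro B hB
        simp only [hT1, hD, Finset.mem_filter, Finset.mem_univ, true_and] at hB ⊢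
        have hvB : v ∉ B := by
          intro hvB
          obtain ⟨w, _, hw⟩ := hB
          exact ((hadj w v).mp (hw v hvB)).2.2 rfl
        rw [Finset.erase_insert hvB]
        exact ⟨Finset.mem_insert_self v B, hB⟩
      · intro A hA
        simp only [hT1, Finset.mem_filter, Finset.mem_univ, true_and] at hA
        exact Finset.insert_erase hA.1
      · intro B hB
        simp only [hD, Finset.mem_filter, Finset.mem_univ, true_and] at hB
        have hvB : v ∉ B := by
          intro hvB
          obtain ⟨w, _, hw⟩ := hB
          exact ((hadj w v).mp (hw v hvB)).2.2 rfl
        exact Finset.erase_insert hvB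
      · intro A hA
        simp only [hT1, Finset.mem_filter, Finset.mem_univ, true_and] at hA
        rw [← Finset.card_erase_add_one hA.1, pow_succ]
        ring
    rw [hbij]
    symm
    have hUiff : Finset.univ.filter (fun U : Finset V =>
          U ≠ ∅ ∧ (↑U : Set V) ⊆ G.neighborSet v) =
        Finset.univ.filter (fun U : Finset V =>
          U ≠ ∅ ∧ (↑U : Set V) ⊆ G.neighborSet v) := rfl
    calc ∑ U ∈ Finset.univ.filter (fun U : Finset V =>
            U ≠ ∅ ∧ (↑U : Set V) ⊆ G.neighborSet v),
          (-1 : ℝ) ^ (U.card + 1)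
            * (x * (1 + x) ^ (Nat.card ↥(⋂ u ∈ U, G'.neighborSet u)))
        = x * ∑ U ∈ Finset.univ.filter (fun U : Finset V =>
            U ≠ ∅ ∧ (↑U : Set V) ⊆ G.neighborSet v),
          (-1 : ℝ) ^ (U.card + 1) * (1 + x) ^ (F U).card := by
          rw [Finset.mul_sum]
          exact Finset.sum_congr rfl fun U _ => by rw [hNat U]; ring
      _ = x * ∑ U ∈ Finset.univ.filter (fun U : Finset V =>
            U ≠ ∅ ∧ (↑U : Set V) ⊆ G.neighborSet v),
          ∑ B ∈ (Finset.univ : Finset (Finset V)),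
            (if B ⊆ F U then (-1 : ℝ) ^ (U.card + 1) * x ^ B.card else 0) := by
          congr 1
          refine Finset.sum_congr rfl fun U _ => ?_
          have hps : (F U).powerset = Finset.univ.filter (fun B => B ⊆ F U) := by
            ext B; simp [Finset.mem_powerset]
          rw [pow_sum_subsets, Finset.mul_sum, ← Finset.sum_filter, ← hps]
      _ = x * ∑ B ∈ (Finset.univ : Finset (Finset V)),
          ∑ U ∈ Finset.univ.filter (fun U : Finset V =>
            U ≠ ∅ ∧ (↑U : Set V) ⊆ G.neighborSet v),
            (if B ⊆ F U then (-1 : ℝ) ^ (U.card + 1) * x ^ B.card else 0) := by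
          rw [Finset.sum_comm]
      _ = x * ∑ B ∈ (Finset.univ : Finset (Finset V)),
          (if W B = ∅ then 0 else 1) * x ^ B.card := by
          congr 1
          refine Finset.sum_congr rfl fun B _ => ?_
          have hfeq : (Finset.univ.filter (fun U : Finset V =>
              U ≠ ∅ ∧ (↑U : Set V) ⊆ G.neighborSet v)).filter (fun U => B ⊆ F U)
              = (W B).powerset.filter (fun U => U ≠ ∅) := by
            ext U
            simp only [Finset.mem_filter, Finset.mem_univ, true_and, Finset.mem_powerset]
            constructor
            · rintro ⟨⟨hne, hsub⟩, hBF⟩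
              refine ⟨fun u hu => ?_, hne⟩
              simp only [hW, Finset.mem_filter, SimpleGraph.mem_neighborFinset]
              have h1 : u ∈ G.neighborSet v := hsub (Finset.mem_coe.mpr hu)
              refine ⟨h1, fun a ha => ?_⟩
              have := hBF ha
              simp only [hF, Finset.mem_filter, Finset.mem_univ, true_and] at this
              exact this u hu
            · rintro ⟨hUW, hne⟩
              refine ⟨⟨hne, fun u hu => ?_⟩, fun a ha => ?_⟩
              · have := hUW (Finset.mem_coe.mp hu)
                simp only [hW, Finset.mem_filter, SimpleGraph.mem_neighborFinset] at this
                exact this.1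
              · simp only [hF, Finset.mem_filter, Finset.mem_univ, true_and]
                intro u hu
                have := hUW hu
                simp only [hW, Finset.mem_filter, SimpleGraph.mem_neighborFinset] at this
                exact this.2 a ha
          rw [← Finset.sum_filter, hfeq]
          exact L1 (W B) (x ^ B.card)
      _ = x * ∑ B ∈ D, x ^ B.card := by
          congr 1
          have hterm : ∀ B : Finset V,
              (if W B = ∅ then (0:ℝ) else 1) * x ^ B.card
                = if ¬ (W B = ∅) then x ^ B.card else 0 := by
            intro B; by_cases h : W B = ∅ <;> simp [h]
          have hfD : Finset.univ.filter (fun B : Finset V => ¬ (W B = ∅)) = D := by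
            ext B
            simp only [hD, Finset.mem_filter, Finset.mem_univ, true_and]
            constructor
            · intro h
              obtain ⟨w, hw⟩ := Finset.nonempty_iff_ne_empty.mpr h
              simp only [hW, Finset.mem_filter, SimpleGraph.mem_neighborFinset] at hw
              exact ⟨w, hw.1, hw.2⟩
            · rintro ⟨w, h1, h2⟩
              apply Finset.nonempty_iff_ne_empty.mp
              exact ⟨w, Finset.mem_filter.mpr
                ⟨(SimpleGraph.mem_neighborFinset _ _ _).mpr h1, h2⟩⟩
          rw [Finset.sum_congr rfl fun B _ => hterm B, ← Finset.sum_filter, hfD]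
  rw [hsplit, hT1sum, hT2sum]
  ring


open Classical in
/-- Vertex removal recursion for the neighborhood polynomial.  Here `G − v` is modelled as
the graph on `V` obtained by deleting all edges incident with `v` (so that `v` becomes
isolated, which does not affect the neighborhood complex; since `G` has at least two
vertices, this graph has the same neighborhood polynomial as the induced subgraph on
`V \ {v}`), and `N_{G−v}(u)` is its open neighborhood of `u`. -/
theorem nhdPoly_vertex_removal {V : Type*} [Fintype V] (hV : 1 < Fintype.card V)
    (G : SimpleGraph V) (v : V) (x : ℝ) :
    nhdPoly G x =
      nhdPoly (G.deleteEdges (G.incidenceSet v)) x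
        + ∑ U ∈ Finset.univ.filter (fun U : Finset V =>
            U ≠ ∅ ∧ (↑U : Set V) ⊆ G.neighborSet v),
            (-1 : ℝ) ^ (U.card + 1)
              * (x * (1 + x) ^
                  (Nat.card ↥(⋂ u ∈ U, (G.deleteEdges (G.incidenceSet v)).neighborSet u)))
        + ∑ U ∈ Finset.univ.filter (fun U : Finset V =>
            U ≠ ∅ ∧ (↑U : Set V) ⊆ G.neighborSet v),
            (if (⋂ u ∈ U, (G.deleteEdges (G.incidenceSet v)).neighborSet u) = (∅ : Set V)
             then x ^ U.card else 0) := by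
  exact nhdPoly_vertex_removal_aux hV G v x
end

section
/- Let G = (V,E) be a finite simple graph on n vertices and let Ḡ denote its complement graph. Then the domination polynomial of G and the neighborhood polynomial of Ḡ satisfy D(G, x) + N(Ḡ, x) = (1+x)^n. -/
open Classical in
/-- The domination polynomial of a finite simple graph `G`, evaluated at `x`:
the generating function of the family of dominating sets of `G`. -/
noncomputable def domPoly {V : Type*} [Fintype V] (G : SimpleGraph V) (x : ℝ) : ℝ :=
  ∑ W ∈ Finset.univ.filter (fun W : Finset V => ∀ v : V, v ∈ W ∨ ∃ w ∈ W, G.Adj w v),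
    x ^ W.card

/-- The domination polynomial of `G` and the neighborhood polynomial of its complement
satisfy `D(G,x) + N(Ḡ,x) = (1+x)^n`, where `n` is the number of vertices. -/
theorem domPoly_add_nhdPoly_compl {V : Type*} [Fintype V] (G : SimpleGraph V) (x : ℝ) :
    domPoly G x + nhdPoly Gᶜ x = (1 + x) ^ (Fintype.card V) := by
  classical
  have key : ∀ W : Finset V,
      (∃ w : V, ∀ a ∈ W, Gᶜ.Adj w a) ↔ ¬(∀ v : V, v ∈ W ∨ ∃ w ∈ W, G.Adj w v) := by
    intro W
    constructor
    · rintro ⟨w, hw⟩ hdom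
      rcases hdom w with h | ⟨u, hu, hadj⟩
      · exact (hw w h).ne rfl
      · exact ((hw u hu).2 hadj.symm)
    · intro h
      push_neg at h
      obtain ⟨v, hv, hv2⟩ := h
      refine ⟨v, fun a ha => ?_⟩
      refine ⟨fun hva => hv (hva ▸ ha), fun hadj => hv2 a ha hadj.symm⟩
  unfold domPoly nhdPoly
  have hsum : ∑ s : Finset V, x ^ s.card = (1 + x) ^ Fintype.card V := by
    have h2 := Fintype.sum_pow_mul_eq_add_pow V x 1
    simpa [add_comm] using h2
  rw [← hsum, ← Finset.sum_filter_add_sum_filter_not Finset.univ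
      (fun W : Finset V => ∀ v : V, v ∈ W ∨ ∃ w ∈ W, G.Adj w v) (fun W => x ^ W.card)]
  congr 1
  refine Finset.sum_congr ?_ fun _ _ => rfl
  ext W
  simp only [Finset.mem_filter, Finset.mem_univ, true_and]
  exact key W
end

section
/- For every integer n ≥ 4, the neighborhood polynomial of the ladder graph L_n (the Cartesian product of the path P₂ with the path P_n, a graph on 2n vertices) satisfies N(L_n, x) = 1 + 4x + 2x² + (2n − 4)·x·(1+x)². -/
open Finset SimpleGraph

namespace NhdLadderAux

/-- Helper: enumerate subsets of a pair. -/
lemma subset_pair_cases {α} [DecidableEq α] {A : Finset α} {a b : α} (h : A ⊆ {a, b}) :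
    A = ∅ ∨ A = {a} ∨ A = {b} ∨ A = {a, b} := by
  classical
  have key : A = ({a, b} : Finset α).filter (· ∈ A) := by
    ext x
    simp only [Finset.mem_filter]
    exact ⟨fun hx => ⟨h hx, hx⟩, fun hx => hx.2⟩
  by_cases ha : a ∈ A <;> by_cases hb : b ∈ A <;>
    simp only [Finset.filter_insert, ha, hb, Finset.filter_singleton,
      if_true, if_false] at key <;> tauto

/-- Helper: enumerate subsets of a triple. -/
lemma subset_triple_cases {α} [DecidableEq α] {A : Finset α} {a b c : α} (h : A ⊆ {a, b, c}) :
    A = ∅ ∨ A = {a} ∨ A = {b} ∨ A = {c} ∨ A = {a,b} ∨ A = {a,c} ∨ A = {b,c} ∨ A = {a,b,c} := by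
  classical
  have key : A = ({a, b, c} : Finset α).filter (· ∈ A) := by
    ext x
    simp only [Finset.mem_filter]
    exact ⟨fun hx => ⟨h hx, hx⟩, fun hx => hx.2⟩
  by_cases ha : a ∈ A <;> by_cases hb : b ∈ A <;> by_cases hc : c ∈ A <;>
    simp only [Finset.filter_insert, ha, hb, hc, Finset.filter_singleton,
      if_true, if_false] at key <;> tauto

abbrev LV (m : ℕ) := Fin 2 × Fin (m+4)

abbrev lad (m : ℕ) : SimpleGraph (LV m) := pathGraph 2 □ pathGraph (m+4)

variable (m : ℕ)

/-- Diagonal pairs. -/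
def dset (p : Fin 2 × Fin (m+3)) : Finset (LV m) := {(p.1, p.2.castSucc), (p.1+1, p.2.succ)}
/-- Horizontal distance-2 pairs. -/
def sset (p : Fin 2 × Fin (m+2)) : Finset (LV m) :=
  {(p.1, p.2.castSucc.castSucc), (p.1, p.2.succ.succ)}
/-- Neighborhoods of interior vertices. -/
def tset (p : Fin 2 × Fin (m+2)) : Finset (LV m) :=
  {(p.1+1, p.2.castSucc.succ), (p.1, p.2.castSucc.castSucc), (p.1, p.2.succ.succ)}

def Efam : Finset (Finset (LV m)) :=
  ({∅} : Finset (Finset (LV m))) ∪ univ.image (fun v : LV m => {v})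
    ∪ univ.image (dset m) ∪ univ.image (sset m) ∪ univ.image (tset m)

lemma lad_adj {u v : LV m} : (lad m).Adj u v ↔
    ((u.1.val + 1 = v.1.val ∨ v.1.val + 1 = u.1.val) ∧ u.2.val = v.2.val) ∨
    ((u.2.val + 1 = v.2.val ∨ v.2.val + 1 = u.2.val) ∧ u.1.val = v.1.val) := by
  simp [boxProd_adj, pathGraph_adj, Fin.ext_iff]

lemma empty_mem : (∅ : Finset (LV m)) ∈ Efam m := by
  refine mem_union_left _ (mem_union_left _ (mem_union_left _ (mem_union_left _ ?_)))
  exact mem_singleton_self _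

lemma sing_mem (v : LV m) : ({v} : Finset (LV m)) ∈ Efam m := by
  refine mem_union_left _ (mem_union_left _ (mem_union_left _ (mem_union_right _ ?_)))
  exact mem_image_of_mem _ (mem_univ v)

lemma dset_mem (p : Fin 2 × Fin (m+3)) : dset m p ∈ Efam m :=
  mem_union_left _ (mem_union_left _ (mem_union_right _ (mem_image_of_mem _ (mem_univ p))))

lemma sset_mem (p : Fin 2 × Fin (m+2)) : sset m p ∈ Efam m :=
  mem_union_left _ (mem_union_right _ (mem_image_of_mem _ (mem_univ p)))

lemma tset_mem (p : Fin 2 × Fin (m+2)) : tset m p ∈ Efam m :=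
  mem_union_right _ (mem_image_of_mem _ (mem_univ p))

/-- flexible diag-pair membership -/
lemma pair_mem (i i' : Fin 2) (c c' : Fin (m+4)) (hrow : i.val ≠ i'.val)
    (hcol : c.val + 1 = c'.val) : ({(i, c), (i', c')} : Finset (LV m)) ∈ Efam m := by
  have hc : c.val < m + 3 := by have := c'.isLt; omega
  have he : ({(i, c), (i', c')} : Finset (LV m)) = dset m (i, ⟨c.val, hc⟩) := by
    have h1 := i.isLt; have h2 := i'.isLt
    ext ⟨r, s⟩
    simp only [dset, mem_insert, mem_singleton, Prod.ext_iff, Fin.ext_iff,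
      Fin.coe_castSucc, Fin.val_succ, Fin.val_add, Fin.val_one, Fin.val_mk,
      and_true, true_and, or_true, true_or, or_false, false_or, and_false, false_and]
    omega
  rw [he]; exact dset_mem m _

lemma pair_mem' (i : Fin 2) (c c' : Fin (m+4)) (hcol : c.val + 2 = c'.val) :
    ({(i, c), (i, c')} : Finset (LV m)) ∈ Efam m := by
  have hc : c.val < m + 2 := by have := c'.isLt; omega
  have he : ({(i, c), (i, c')} : Finset (LV m)) = sset m (i, ⟨c.val, hc⟩) := by
    ext ⟨r, s⟩
    simp only [sset, mem_insert, mem_singleton, Prod.ext_iff, Fin.ext_iff,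
      Fin.coe_castSucc, Fin.val_succ, Fin.val_mk,
      and_true, true_and, or_true, true_or, or_false, false_or, and_false, false_and]
    omega
  rw [he]; exact sset_mem m _

lemma triple_mem (i i' : Fin 2) (c₀ c₁ c₂ : Fin (m+4)) (hrow : i.val ≠ i'.val)
    (h01 : c₀.val + 1 = c₁.val) (h12 : c₁.val + 1 = c₂.val) :
    ({(i', c₁), (i, c₀), (i, c₂)} : Finset (LV m)) ∈ Efam m := by
  have hc : c₀.val < m + 2 := by have := c₂.isLt; omega
  have he : ({(i', c₁), (i, c₀), (i, c₂)} : Finset (LV m)) = tset m (i, ⟨c₀.val, hc⟩) := by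
    have h1 := i.isLt; have h2 := i'.isLt
    ext ⟨r, s⟩
    simp only [tset, mem_insert, mem_singleton, Prod.ext_iff, Fin.ext_iff,
      Fin.coe_castSucc, Fin.val_succ, Fin.val_add, Fin.val_one, Fin.val_mk,
      and_true, true_and, or_true, true_or, or_false, false_or, and_false, false_and]
    omega
  rw [he]; exact tset_mem m _

lemma mem_Efam_iff (A : Finset (LV m)) :
    (∃ w : LV m, ∀ a ∈ A, (pathGraph 2 □ pathGraph (m+4)).Adj w a) ↔ A ∈ Efam m := by
  constructor
  · rintro ⟨⟨i, c⟩, hw⟩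
    have hi := i.isLt
    have hc := c.isLt
    by_cases h0 : c.val = 0
    · -- w in column 0
      have hsub : A ⊆ ({(i+1, c), (i, ⟨1, by omega⟩)} : Finset (LV m)) := by
        rintro ⟨a1, a2⟩ ha
        have hadj := (lad_adj m).1 (hw _ ha)
        have := a1.isLt; have := a2.isLt
        simp only [Fin.val_add, Fin.val_one, Fin.val_mk] at hadj
        simp only [mem_insert, mem_singleton, Prod.ext_iff, Fin.ext_iff,
          Fin.val_add, Fin.val_one, Fin.val_mk]
        omega
      rcases subset_pair_cases hsub with rfl | rfl | rfl | rfl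
      · exact empty_mem m
      · exact sing_mem m _
      · exact sing_mem m _
      · exact pair_mem m (i+1) i c ⟨1, by omega⟩
          (by simp only [Fin.val_add, Fin.val_one]; omega)
          (by simp only [Fin.val_mk]; omega)
    · by_cases hL : c.val = m + 3
      · -- w in last column
        have hsub : A ⊆ ({(i, ⟨m+2, by omega⟩), (i+1, c)} : Finset (LV m)) := by
          rintro ⟨a1, a2⟩ ha
          have hadj := (lad_adj m).1 (hw _ ha)
          have := a1.isLt; have := a2.isLt
          simp only [Fin.val_add, Fin.val_one, Fin.val_mk] at hadj
          simp only [mem_insert, mem_singleton, Prod.ext_iff, Fin.ext_iff,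
            Fin.val_add, Fin.val_one, Fin.val_mk]
          omega
        rcases subset_pair_cases hsub with rfl | rfl | rfl | rfl
        · exact empty_mem m
        · exact sing_mem m _
        · exact sing_mem m _
        · exact pair_mem m i (i+1) ⟨m+2, by omega⟩ c
            (by simp only [Fin.val_add, Fin.val_one]; omega)
            (by simp only [Fin.val_mk]; omega)
      · -- interior column
        have hsub : A ⊆ ({(i+1, c), (i, ⟨c.val-1, by omega⟩), (i, ⟨c.val+1, by omega⟩)} :
            Finset (LV m)) := by
          rintro ⟨a1, a2⟩ ha
          have hadj := (lad_adj m).1 (hw _ ha)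
          have := a1.isLt; have := a2.isLt
          simp only [Fin.val_add, Fin.val_one, Fin.val_mk] at hadj
          simp only [mem_insert, mem_singleton, Prod.ext_iff, Fin.ext_iff,
            Fin.val_add, Fin.val_one, Fin.val_mk]
          omega
        rcases subset_triple_cases hsub with rfl | rfl | rfl | rfl | rfl | rfl | rfl | rfl
        · exact empty_mem m
        · exact sing_mem m _
        · exact sing_mem m _
        · exact sing_mem m _
        · rw [Finset.pair_comm]
          exact pair_mem m i (i+1) ⟨c.val-1, by omega⟩ c
            (by simp only [Fin.val_add, Fin.val_one]; omega)
            (by simp only [Fin.val_mk]; omega)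
        · exact pair_mem m (i+1) i c ⟨c.val+1, by omega⟩
            (by simp only [Fin.val_add, Fin.val_one]; omega)
            (by simp only [Fin.val_mk])
        · exact pair_mem' m i ⟨c.val-1, by omega⟩ ⟨c.val+1, by omega⟩
            (by simp only [Fin.val_mk]; omega)
        · exact triple_mem m i (i+1) ⟨c.val-1, by omega⟩ c ⟨c.val+1, by omega⟩
            (by simp only [Fin.val_add, Fin.val_one]; omega)
            (by simp only [Fin.val_mk]; omega)
            (by simp only [Fin.val_mk])
  · intro hA
    simp only [Efam, mem_union, mem_singleton, mem_image, mem_univ, true_and] at hA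
    rcases hA with (((rfl | ⟨v, rfl⟩) | ⟨p, rfl⟩) | ⟨p, rfl⟩) | ⟨p, rfl⟩
    · exact ⟨(0, 0), by simp⟩
    · refine ⟨(v.1 + 1, v.2), ?_⟩
      intro a ha
      rw [mem_singleton] at ha
      subst ha
      rw [lad_adj]
      have := a.1.isLt
      simp only [Fin.val_add, Fin.val_one, and_true, true_and, eq_self_iff_true]
      omega
    · refine ⟨(p.1 + 1, p.2.castSucc), ?_⟩
      intro a ha
      have := p.1.isLt
      simp only [dset, mem_insert, mem_singleton] at ha
      rcases ha with rfl | rfl <;>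
      · rw [lad_adj]
        simp only [Fin.val_add, Fin.val_one, Fin.coe_castSucc, Fin.val_succ,
          and_true, true_and, or_true, true_or, or_false, false_or, eq_self_iff_true]
        all_goals omega
    · refine ⟨(p.1, p.2.castSucc.succ), ?_⟩
      intro a ha
      simp only [sset, mem_insert, mem_singleton] at ha
      rcases ha with rfl | rfl <;>
      · rw [lad_adj]
        simp only [Fin.val_add, Fin.val_one, Fin.coe_castSucc, Fin.val_succ,
          and_true, true_and, or_true, true_or, or_false, false_or, eq_self_iff_true]
        all_goals omega
    · refine ⟨(p.1, p.2.castSucc.succ), ?_⟩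
      intro a ha
      have := p.1.isLt
      simp only [tset, mem_insert, mem_singleton] at ha
      rcases ha with rfl | rfl | rfl <;>
      · rw [lad_adj]
        simp only [Fin.val_add, Fin.val_one, Fin.coe_castSucc, Fin.val_succ,
          and_true, true_and, or_true, true_or, or_false, false_or, eq_self_iff_true]
        all_goals omega

lemma dset_card (p : Fin 2 × Fin (m+3)) : (dset m p).card = 2 := by
  rw [dset, card_insert_of_notMem, card_singleton]
  simp only [mem_singleton, Prod.ext_iff, Fin.ext_iff, Fin.coe_castSucc, Fin.val_succ]
  omega

lemma sset_card (p : Fin 2 × Fin (m+2)) : (sset m p).card = 2 := by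
  rw [sset, card_insert_of_notMem, card_singleton]
  simp only [mem_singleton, Prod.ext_iff, Fin.ext_iff, Fin.coe_castSucc, Fin.val_succ]
  omega

lemma tset_card (p : Fin 2 × Fin (m+2)) : (tset m p).card = 3 := by
  have h1 := p.1.isLt
  rw [tset, card_insert_of_notMem, card_insert_of_notMem, card_singleton]
  · simp only [mem_singleton, Prod.ext_iff, Fin.ext_iff, Fin.coe_castSucc, Fin.val_succ]
    omega
  · simp only [mem_insert, mem_singleton, Prod.ext_iff, Fin.ext_iff, Fin.coe_castSucc,
      Fin.val_succ, Fin.val_add, Fin.val_one]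
    omega

lemma dset_inj : Function.Injective (dset m) := by
  rintro ⟨p1, p2⟩ ⟨q1, q2⟩ h
  have e1 : ((p1, p2.castSucc) : LV m) ∈ dset m (q1, q2) := by
    rw [← h]; simp [dset]
  have e2 : ((p1 + 1, p2.succ) : LV m) ∈ dset m (q1, q2) := by
    rw [← h]; simp [dset]
  have := p1.isLt; have := q1.isLt
  simp only [dset, mem_insert, mem_singleton, Prod.ext_iff, Fin.ext_iff, Fin.coe_castSucc,
    Fin.val_succ, Fin.val_add, Fin.val_one] at e1 e2
  simp only [Prod.ext_iff, Fin.ext_iff]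
  omega

lemma sset_inj : Function.Injective (sset m) := by
  rintro ⟨p1, p2⟩ ⟨q1, q2⟩ h
  have e1 : ((p1, p2.castSucc.castSucc) : LV m) ∈ sset m (q1, q2) := by
    rw [← h]; simp [sset]
  have e2 : ((p1, p2.succ.succ) : LV m) ∈ sset m (q1, q2) := by
    rw [← h]; simp [sset]
  simp only [sset, mem_insert, mem_singleton, Prod.ext_iff, Fin.ext_iff, Fin.coe_castSucc,
    Fin.val_succ] at e1 e2
  simp only [Prod.ext_iff, Fin.ext_iff]
  omega

lemma tset_inj : Function.Injective (tset m) := by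
  rintro ⟨p1, p2⟩ ⟨q1, q2⟩ h
  have e1 : ((p1 + 1, p2.castSucc.succ) : LV m) ∈ tset m (q1, q2) := by
    rw [← h]; simp [tset]
  have e2 : ((p1, p2.castSucc.castSucc) : LV m) ∈ tset m (q1, q2) := by
    rw [← h]; simp [tset]
  have e3 : ((p1, p2.succ.succ) : LV m) ∈ tset m (q1, q2) := by
    rw [← h]; simp [tset]
  have := p1.isLt; have := q1.isLt
  simp only [tset, mem_insert, mem_singleton, Prod.ext_iff, Fin.ext_iff, Fin.coe_castSucc,
    Fin.val_succ, Fin.val_add, Fin.val_one] at e1 e2 e3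
  simp only [Prod.ext_iff, Fin.ext_iff]
  omega

lemma card_disjoint {α : Type*} {s t : Finset (Finset α)} {k l : ℕ}
    (hk : ∀ A ∈ s, A.card = k) (hl : ∀ A ∈ t, A.card = l) (hkl : k ≠ l) : Disjoint s t := by
  rw [Finset.disjoint_left]
  intro A hs ht
  exact hkl ((hk A hs).symm.trans (hl A ht))

lemma sum_Efam (x : ℝ) : ∑ A ∈ Efam m, x ^ A.card =
    1 + (2*(m:ℝ)+8) * x + (4*(m:ℝ)+10) * x^2 + (2*(m:ℝ)+4) * x^3 := by
  have c0 : ∀ A ∈ ({∅} : Finset (Finset (LV m))), A.card = 0 := by simp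
  have c1 : ∀ A ∈ univ.image (fun v : LV m => ({v} : Finset (LV m))), A.card = 1 := by
    simp only [mem_image, mem_univ, true_and]
    rintro A ⟨v, rfl⟩; simp
  have c2d : ∀ A ∈ univ.image (dset m), A.card = 2 := by
    simp only [mem_image, mem_univ, true_and]
    rintro A ⟨p, rfl⟩; exact dset_card m p
  have c2s : ∀ A ∈ univ.image (sset m), A.card = 2 := by
    simp only [mem_image, mem_univ, true_and]
    rintro A ⟨p, rfl⟩; exact sset_card m p
  have c3 : ∀ A ∈ univ.image (tset m), A.card = 3 := by
    simp only [mem_image, mem_univ, true_and]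
    rintro A ⟨p, rfl⟩; exact tset_card m p
  have dDS : Disjoint (univ.image (dset m)) (univ.image (sset m)) := by
    rw [Finset.disjoint_left]
    simp only [mem_image, mem_univ, true_and]
    rintro A ⟨p, rfl⟩ ⟨q, hq⟩
    have e1 : ((p.1, p.2.castSucc) : LV m) ∈ sset m q := by rw [hq]; simp [dset]
    have e2 : ((p.1 + 1, p.2.succ) : LV m) ∈ sset m q := by rw [hq]; simp [dset]
    have := p.1.isLt; have := q.1.isLt
    simp only [sset, mem_insert, mem_singleton, Prod.ext_iff, Fin.ext_iff, Fin.coe_castSucc,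
      Fin.val_succ, Fin.val_add, Fin.val_one] at e1 e2
    omega
  have d01 : Disjoint ({∅} : Finset (Finset (LV m))) (univ.image (fun v : LV m => ({v} : Finset (LV m)))) :=
    card_disjoint c0 c1 (by norm_num)
  have d2 : Disjoint (({∅} : Finset (Finset (LV m))) ∪ univ.image (fun v : LV m => ({v} : Finset (LV m))))
      (univ.image (dset m)) := by
    rw [Finset.disjoint_union_left]
    exact ⟨card_disjoint c0 c2d (by norm_num), card_disjoint c1 c2d (by norm_num)⟩
  have d3 : Disjoint ((({∅} : Finset (Finset (LV m))) ∪ univ.image (fun v : LV m => ({v} : Finset (LV m))))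
      ∪ univ.image (dset m)) (univ.image (sset m)) := by
    rw [Finset.disjoint_union_left, Finset.disjoint_union_left]
    exact ⟨⟨card_disjoint c0 c2s (by norm_num), card_disjoint c1 c2s (by norm_num)⟩, dDS⟩
  have d4 : Disjoint (((({∅} : Finset (Finset (LV m))) ∪ univ.image (fun v : LV m => ({v} : Finset (LV m))))
      ∪ univ.image (dset m)) ∪ univ.image (sset m)) (univ.image (tset m)) := by
    rw [Finset.disjoint_union_left, Finset.disjoint_union_left, Finset.disjoint_union_left]
    exact ⟨⟨⟨card_disjoint c0 c3 (by norm_num), card_disjoint c1 c3 (by norm_num)⟩,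
      card_disjoint c2d c3 (by norm_num)⟩, card_disjoint c2s c3 (by norm_num)⟩
  have s0 : ∑ A ∈ ({∅} : Finset (Finset (LV m))), x ^ A.card = 1 := by simp
  have s1 : ∑ A ∈ univ.image (fun v : LV m => ({v} : Finset (LV m))), x ^ A.card
      = (2*(m:ℝ)+8) * x := by
    rw [sum_image (fun a _ b _ h => Finset.singleton_injective h)]
    simp only [card_singleton, pow_one, sum_const, card_univ, Fintype.card_prod,
      Fintype.card_fin, nsmul_eq_mul]
    push_cast; ring
  have s2 : ∑ A ∈ univ.image (dset m), x ^ A.card = (2*(m:ℝ)+6) * x^2 := by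
    rw [sum_image (fun a _ b _ h => dset_inj m h)]
    simp only [dset_card, sum_const, card_univ, Fintype.card_prod,
      Fintype.card_fin, nsmul_eq_mul]
    push_cast; ring
  have s3 : ∑ A ∈ univ.image (sset m), x ^ A.card = (2*(m:ℝ)+4) * x^2 := by
    rw [sum_image (fun a _ b _ h => sset_inj m h)]
    simp only [sset_card, sum_const, card_univ, Fintype.card_prod,
      Fintype.card_fin, nsmul_eq_mul]
    push_cast; ring
  have s4 : ∑ A ∈ univ.image (tset m), x ^ A.card = (2*(m:ℝ)+4) * x^3 := by
    rw [sum_image (fun a _ b _ h => tset_inj m h)]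
    simp only [tset_card, sum_const, card_univ, Fintype.card_prod,
      Fintype.card_fin, nsmul_eq_mul]
    push_cast; ring
  rw [Efam, sum_union d4, sum_union d3, sum_union d2, sum_union d01, s0, s1, s2, s3, s4]
  ring

end NhdLadderAux


/-- The neighborhood polynomial of the ladder graph `L_n = P₂ □ P_n` (`n ≥ 4`):
`N(L_n, x) = 1 + 4x + 2x² + (2n − 4)·x·(1+x)²`. -/
theorem nhdPoly_ladder (n : ℕ) (hn : 4 ≤ n) (x : ℝ) :
    nhdPoly (SimpleGraph.pathGraph 2 □ SimpleGraph.pathGraph n) x =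
      1 + 4 * x + 2 * x ^ 2 + (2 * (n : ℝ) - 4) * x * (1 + x) ^ 2 := by
  obtain ⟨m, rfl⟩ : ∃ m, n = m + 4 := ⟨n - 4, by omega⟩
  unfold nhdPoly
  refine Eq.trans (Finset.sum_congr ?_ fun _ _ => rfl)
    ((NhdLadderAux.sum_Efam m x).trans (by push_cast; ring))
  ext A
  simp only [Finset.mem_filter, Finset.mem_univ, true_and]
  exact NhdLadderAux.mem_Efam_iff m A
end
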